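/- Define operators on the vector space with basis {x^{(β)} : β ∈ ℤ₊ⁿ} by: e_{s,j} x^{(β)} = q^{-Σ_{i: s<i<j} β_i}[β_s+1] x^{(β+ε_s−ε_j)} for 1 ≤ s < j ≤ n, e_{s,n+1} x^{(β)} = q^{-Σ_{i=s+1}^{n} β_i}[β_s+1](Σ_{i=1}^{n} θ(ε_i,β)[β_i]) x^{(β+ε_s)} for 1 ≤ s ≤ n. Then for 1 ≤ s < j ≤ n, the q-commutator identity e_{s,n+1} = e_{s,j} e_{j,n+1} − q e_{j,n+1} e_{s,j} holds as operators. -/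

import Mathlib

open Finset

/-- The quantum integer `[m] := (q^m - q^{-m})/(q - q^{-1})` for `m : ℤ`. -/
def qint {K : Type*} [Field K] (q : K) (m : ℤ) : K :=
  (q ^ m - q ^ (-m)) / (q - q⁻¹)

/-- `θ(ε_k, β) = q^{Σ_{s>k} β_s - Σ_{s<k} β_s}`. -/
def thq {K : Type*} [Field K] (q : K) (n : ℕ) (β : ℕ → ℤ) (k : ℕ) : K :=
  q ^ ((∑ s ∈ Finset.Icc (k + 1) n, β s) - ∑ s ∈ Finset.Ico 1 k, β s)

/-- The `i`-th standard basis vector `ε_i`. -/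
def eps (i : ℕ) : ℕ → ℤ := fun k => if k = i then 1 else 0

section Aux

variable {K : Type*} [Field K]

lemma qint_add (q : K) (hq0 : q ≠ 0) (a b : ℤ) :
    qint q (a + b) = q ^ b * qint q a + q ^ (-a) * qint q b := by
  unfold qint
  rw [neg_add, zpow_add₀ hq0, zpow_add₀ hq0, mul_div_assoc', mul_div_assoc', ← add_div]
  ring_nf

lemma qint_one (q : K) (hd : q - q⁻¹ ≠ 0) : qint q 1 = 1 := by
  unfold qint
  rw [zpow_one, zpow_neg, zpow_one, div_self hd]

lemma qint_zero (q : K) : qint q 0 = 0 := by simp [qint]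

lemma qint_succ (q : K) (hq0 : q ≠ 0) (hd : q - q⁻¹ ≠ 0) (m : ℤ) :
    qint q (m + 1) = q * qint q m + q ^ (-m) := by
  rw [qint_add q hq0 m 1, qint_one q hd, zpow_one, mul_one]

lemma eps_apply (i k : ℕ) : eps i k = if k = i then 1 else 0 := rfl

lemma beta'_apply (β : ℕ → ℤ) (s j k : ℕ) :
    (β + eps s - eps j) k = β k + (if k = s then 1 else 0) - (if k = j then 1 else 0) := rfl

lemma qint_q2 (q : K) (hq0 : q ≠ 0) (hd : q - q⁻¹ ≠ 0) (c : ℤ) :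
    qint q c * (q * q - 1) = q * q ^ c - q * q ^ (-c) := by
  unfold qint
  rw [div_mul_eq_mul_div, div_eq_iff hd]
  have h1 : q * q - 1 = q * (q - q⁻¹) := by
    rw [mul_sub, mul_inv_cancel₀ hq0]
  rw [h1]
  ring

lemma zpowOneAdd (q : K) (hq0 : q ≠ 0) {a b : ℤ} (h : a = 1 + b) :
    q * q ^ b = q ^ a := by
  rw [h, zpow_add₀ hq0, zpow_one]

lemma zpowTwoAdd (q : K) (hq0 : q ≠ 0) {a b : ℤ} (h : a = 2 + b) :
    q * (q * q ^ b) = q ^ a := by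
  rw [h, zpow_add₀ hq0, show (2:ℤ) = 1 + 1 by norm_num, zpow_add₀ hq0, zpow_one]
  ring

lemma qint_pred (q : K) (hq0 : q ≠ 0) (hd : q - q⁻¹ ≠ 0) (m : ℤ) :
    qint q (m - 1) = q * qint q m - q ^ m := by
  have h := qint_succ q hq0 hd (m - 1)
  rw [show m - 1 + 1 = m by ring] at h
  have h2 := qint_q2 q hq0 hd m
  have h3 : q * q ^ (-m) = q ^ (-(m - 1)) := zpowOneAdd q hq0 (by ring)
  apply mul_left_cancel₀ hq0
  linear_combination (-1 : K) * h + (-1 : K) * h2 + h3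

lemma sum_shift (β : ℕ → ℤ) (s j : ℕ) (A : Finset ℕ) :
    ∑ k ∈ A, (β + eps s - eps j) k
      = (∑ k ∈ A, β k) + (if s ∈ A then 1 else 0) - (if j ∈ A then 1 else 0) := by
  simp only [Pi.sub_apply, Pi.add_apply, eps]
  rw [Finset.sum_sub_distrib, Finset.sum_add_distrib,
    Finset.sum_ite_eq' A s (fun _ => (1:ℤ)), Finset.sum_ite_eq' A j (fun _ => (1:ℤ))]

lemma key_scalar {K : Type*} [Field K] (q : K) (hq0 : q ≠ 0) (hd : q - q⁻¹ ≠ 0)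
    (n s j : ℕ) (hs : 1 ≤ s) (hsj : s < j) (hjn : j ≤ n) (β : ℕ → ℤ) :
    qint q (β j + 1) * (∑ i ∈ Finset.Icc 1 n, thq q n β i * qint q (β i))
      - q * qint q (β j) *
        (∑ i ∈ Finset.Icc 1 n, thq q n (β + eps s - eps j) i * qint q ((β + eps s - eps j) i))
      = q ^ (-β j) * ∑ i ∈ Finset.Icc 1 n, thq q n β i * qint q (β i) := by
  set β' : ℕ → ℤ := β + eps s - eps j with hβ'
  set g : ℕ → K := fun k =>
    qint q (β j) * q ^ ((∑ i ∈ Finset.Ico k (n+1), β i) - ∑ i ∈ Finset.Ico 1 k, β i) with hg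
  set F : ℕ → K := fun k =>
    qint q (β j + 1) * (thq q n β k * qint q (β k))
      - q * qint q (β j) * (thq q n β' k * qint q (β' k))
      - q ^ (-β j) * (thq q n β k * qint q (β k)) with hF
  rw [← sub_eq_zero]
  have expand : qint q (β j + 1) * (∑ i ∈ Finset.Icc 1 n, thq q n β i * qint q (β i))
      - q * qint q (β j) * (∑ i ∈ Finset.Icc 1 n, thq q n β' i * qint q (β' i))
      - q ^ (-β j) * (∑ i ∈ Finset.Icc 1 n, thq q n β i * qint q (β i))
      = ∑ k ∈ Finset.Icc 1 n, F k := by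
    simp only [hF]
    rw [Finset.mul_sum, Finset.mul_sum, Finset.mul_sum, ← Finset.sum_sub_distrib,
      ← Finset.sum_sub_distrib]
  rw [expand]
  -- auxiliary facts about g
  have ga : ∀ k, k ≤ n → thq q n β k * q ^ (β k)
      = q ^ ((∑ i ∈ Finset.Ico k (n+1), β i) - ∑ i ∈ Finset.Ico 1 k, β i) := by
    intro k hk
    unfold thq
    rw [← zpow_add₀ hq0]
    congr 1
    rw [Finset.sum_eq_sum_Ico_succ_bot (by omega : k < n + 1), Finset.Ico_add_one_right_eq_Icc]
    ring
  have gb : ∀ k, 1 ≤ k → thq q n β k * q ^ (-β k)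
      = q ^ ((∑ i ∈ Finset.Ico (k+1) (n+1), β i) - ∑ i ∈ Finset.Ico 1 (k+1), β i) := by
    intro k hk
    unfold thq
    rw [← zpow_add₀ hq0]
    congr 1
    rw [Finset.sum_Ico_succ_top (by omega : 1 ≤ k), Finset.Ico_add_one_right_eq_Icc]
    ring
  -- case k < s
  have c1 : ∀ k ∈ Finset.Ico 1 s, F k = 0 := by
    intro k hk
    rw [Finset.mem_Ico] at hk
    have hθ : thq q n β' k = thq q n β k := by
      simp only [hβ']
      unfold thq
      rw [sum_shift, sum_shift,
        if_pos (Finset.mem_Icc.mpr ⟨by omega, by omega⟩),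
        if_pos (Finset.mem_Icc.mpr ⟨by omega, hjn⟩),
        if_neg (by rw [Finset.mem_Ico]; omega),
        if_neg (by rw [Finset.mem_Ico]; omega)]
      congr 1
      ring
    have hbk : β' k = β k := by
      rw [hβ', beta'_apply, if_neg (by omega : ¬ k = s), if_neg (by omega : ¬ k = j)]
      ring
    simp only [hF]
    rw [hθ, hbk, qint_succ q hq0 hd (β j)]
    ring
  -- case k > j
  have c2 : ∀ k ∈ Finset.Ico (j+1) (n+1), F k = 0 := by
    intro k hk
    rw [Finset.mem_Ico] at hk
    have hθ : thq q n β' k = thq q n β k := by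
      simp only [hβ']
      unfold thq
      rw [sum_shift, sum_shift,
        if_neg (by rw [Finset.mem_Icc]; omega),
        if_neg (by rw [Finset.mem_Icc]; omega),
        if_pos (Finset.mem_Ico.mpr ⟨hs, by omega⟩),
        if_pos (Finset.mem_Ico.mpr ⟨by omega, by omega⟩)]
      congr 1
      ring
    have hbk : β' k = β k := by
      rw [hβ', beta'_apply, if_neg (by omega : ¬ k = s), if_neg (by omega : ¬ k = j)]
      ring
    simp only [hF]
    rw [hθ, hbk, qint_succ q hq0 hd (β j)]
    ring
  -- case k = s
  have c3 : F s = - g (s+1) := by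
    have hθ : q * thq q n β' s = thq q n β s := by
      simp only [hβ']
      unfold thq
      rw [sum_shift, sum_shift,
        if_neg (by rw [Finset.mem_Icc]; omega),
        if_pos (Finset.mem_Icc.mpr ⟨by omega, hjn⟩),
        if_neg (by rw [Finset.mem_Ico]; omega),
        if_neg (by rw [Finset.mem_Ico]; omega)]
      exact zpowOneAdd q hq0 (by ring)
    have hbs : β' s = β s + 1 := by
      rw [hβ', beta'_apply, if_pos rfl, if_neg (by omega : ¬ s = j)]
      ring
    simp only [hF, hg]
    rw [hbs, ← gb s hs, qint_succ q hq0 hd (β j), qint_succ q hq0 hd (β s), ← hθ]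
    ring
  -- case k = j
  have c4 : F j = g j := by
    have hθ : q * thq q n β' j = thq q n β j := by
      simp only [hβ']
      unfold thq
      rw [sum_shift, sum_shift,
        if_neg (by rw [Finset.mem_Icc]; omega),
        if_neg (by rw [Finset.mem_Icc]; omega),
        if_pos (Finset.mem_Ico.mpr ⟨hs, hsj⟩),
        if_neg (by rw [Finset.mem_Ico]; omega)]
      exact zpowOneAdd q hq0 (by ring)
    have hbj : β' j = β j - 1 := by
      rw [hβ', beta'_apply, if_pos rfl, if_neg (by omega : ¬ j = s)]
      ring
    simp only [hF, hg]
    rw [hbj, ← ga j hjn, qint_succ q hq0 hd (β j), qint_pred q hq0 hd (β j), ← hθ]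
    ring
  -- case s < k < j
  have c5 : ∀ k ∈ Finset.Ico (s+1) j, F k = g k - g (k+1) := by
    intro k hk
    rw [Finset.mem_Ico] at hk
    have hθ : q * (q * thq q n β' k) = thq q n β k := by
      simp only [hβ']
      unfold thq
      rw [sum_shift, sum_shift,
        if_neg (by rw [Finset.mem_Icc]; omega),
        if_pos (Finset.mem_Icc.mpr ⟨by omega, hjn⟩),
        if_pos (Finset.mem_Ico.mpr ⟨hs, by omega⟩),
        if_neg (by rw [Finset.mem_Ico]; omega)]
      exact zpowTwoAdd q hq0 (by ring)
    have hbk : β' k = β k := by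
      rw [hβ', beta'_apply, if_neg (by omega : ¬ k = s), if_neg (by omega : ¬ k = j)]
      ring
    simp only [hF, hg]
    rw [hbk, ← ga k (by omega), ← gb k (by omega), qint_succ q hq0 hd (β j), ← hθ]
    linear_combination (q * qint q (β j) * thq q n β' k) * qint_q2 q hq0 hd (β k)
  -- telescoping
  have tel : ∑ k ∈ Finset.Ico (s+1) j, (g k - g (k+1)) = g (s+1) - g j := by
    rw [Finset.sum_Ico_eq_sub _ (by omega : s + 1 ≤ j), Finset.sum_range_sub' g,
      Finset.sum_range_sub' g]
    ring
  have tel' : ∑ k ∈ Finset.Ico (s+1) j, F k = g (s+1) - g j :=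
    (Finset.sum_congr rfl c5).trans tel
  -- assemble
  rw [← Finset.Ico_add_one_right_eq_Icc,
    ← Finset.sum_Ico_consecutive _ (hs) (by omega : s ≤ n + 1),
    Finset.sum_eq_sum_Ico_succ_bot (by omega : s < n + 1),
    ← Finset.sum_Ico_consecutive _ (by omega : s + 1 ≤ j) (by omega : j ≤ n + 1),
    Finset.sum_eq_sum_Ico_succ_bot (by omega : j < n + 1),
    Finset.sum_eq_zero c1, Finset.sum_eq_zero c2, tel', c3, c4]
  ring

end Aux

theorem qbracket_e_s_nplus1 {K V : Type*} [Field K] [AddCommGroup V] [Module K V]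
    (q : K) (hq0 : q ≠ 0) (hq1 : q ≠ 1) (hqm : q ≠ -1) (n : ℕ)
    (X : (ℕ → ℤ) → V)
    (hX0 : ∀ β : ℕ → ℤ, (∃ k ∈ Finset.Icc 1 n, β k < 0) → X β = 0)
    (E : ℕ → ℕ → Module.End K V) (En1 : ℕ → Module.End K V)
    (hE : ∀ s j, 1 ≤ s → s < j → j ≤ n → ∀ β : ℕ → ℤ, (∀ k ∈ Finset.Icc 1 n, 0 ≤ β k) →
      E s j (X β) = (q ^ (-(∑ i ∈ Finset.Ioo s j, β i)) * qint q (β s + 1)) •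
        X (β + eps s - eps j))
    (hEn1 : ∀ s, 1 ≤ s → s ≤ n → ∀ β : ℕ → ℤ, (∀ k ∈ Finset.Icc 1 n, 0 ≤ β k) →
      En1 s (X β) = (q ^ (-(∑ i ∈ Finset.Icc (s + 1) n, β i)) * qint q (β s + 1) *
          ∑ i ∈ Finset.Icc 1 n, thq q n β i * qint q (β i)) • X (β + eps s)) :
    ∀ s j, 1 ≤ s → s < j → j ≤ n → ∀ β : ℕ → ℤ, (∀ k ∈ Finset.Icc 1 n, 0 ≤ β k) →
      En1 s (X β) = (E s j * En1 j - q • (En1 j * E s j)) (X β) := by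
  have hd : q - q⁻¹ ≠ 0 := by
    intro h0
    have h' : q * (q - q⁻¹) = 0 := by rw [h0, mul_zero]
    rw [mul_sub, mul_inv_cancel₀ hq0] at h'
    have h'' : (q - 1) * (q + 1) = 0 := by linear_combination h'
    rcases mul_eq_zero.mp h'' with h | h
    · exact hq1 (by linear_combination h)
    · exact hqm (by linear_combination h)
  intro s j hs hsj hjn β hβ
  have hsn : s ≤ n := by omega
  -- LHS
  rw [hEn1 s hs hsn β hβ]
  -- RHS
  rw [LinearMap.sub_apply, LinearMap.smul_apply, Module.End.mul_apply, Module.End.mul_apply]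
  rw [hEn1 j (by omega) hjn β hβ, map_smul, hE s j hs hsj hjn β hβ, map_smul]
  have hβj : ∀ k ∈ Finset.Icc 1 n, 0 ≤ (β + eps j) k := by
    intro k hk
    have := hβ k hk
    simp only [Pi.add_apply, eps]
    split <;> omega
  rw [hE s j hs hsj hjn (β + eps j) hβj]
  have hsum1 : ∑ i ∈ Finset.Ioo s j, (β + eps j) i = ∑ i ∈ Finset.Ioo s j, β i := by
    simp only [Pi.add_apply, eps_apply]
    rw [Finset.sum_add_distrib, Finset.sum_ite_eq' _ j (fun _ => (1:ℤ)),
      if_neg (by rw [Finset.mem_Ioo]; omega), add_zero]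
  have hval1 : (β + eps j) s = β s := by
    show β s + (if s = j then 1 else 0) = β s
    rw [if_neg (by omega : ¬ s = j)]
    ring
  have harg1 : β + eps j + eps s - eps j = β + eps s := by
    funext k
    simp only [Pi.sub_apply, Pi.add_apply, eps]
    ring
  rw [hsum1, hval1, harg1]
  -- second branch
  have h2 : En1 j (X (β + eps s - eps j))
      = (q ^ (-(∑ i ∈ Finset.Icc (j + 1) n, β i)) * qint q (β j) *
          ∑ i ∈ Finset.Icc 1 n, thq q n (β + eps s - eps j) i * qint q ((β + eps s - eps j) i))
        • X (β + eps s) := by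
    by_cases hm : β j = 0
    · rw [hX0 (β + eps s - eps j) ⟨j, Finset.mem_Icc.mpr ⟨by omega, hjn⟩, by
        rw [beta'_apply, if_pos rfl, if_neg (by omega : ¬ j = s)]
        omega⟩, map_zero, hm, qint_zero]
      simp
    · have hβ'0 : ∀ k ∈ Finset.Icc 1 n, 0 ≤ (β + eps s - eps j) k := by
        intro k hk
        have h1 := hβ k hk
        have h4 := hβ j (Finset.mem_Icc.mpr ⟨by omega, hjn⟩)
        rw [beta'_apply]
        by_cases e1 : k = s
        · rw [if_pos e1, if_neg (by omega : ¬ k = j)]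
          omega
        · rw [if_neg e1]
          by_cases e2 : k = j
          · rw [if_pos e2]
            have h3 : β k = β j := by rw [e2]
            omega
          · rw [if_neg e2]
            omega
      rw [hEn1 j (by omega) hjn _ hβ'0]
      have hc1 : ∑ i ∈ Finset.Icc (j + 1) n, (β + eps s - eps j) i
          = ∑ i ∈ Finset.Icc (j + 1) n, β i := by
        rw [sum_shift, if_neg (by rw [Finset.mem_Icc]; omega),
          if_neg (by rw [Finset.mem_Icc]; omega)]
        ring
      have hc2 : (β + eps s - eps j) j + 1 = β j := by
        rw [beta'_apply, if_pos rfl, if_neg (by omega : ¬ j = s)]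
        ring
      have hc3 : β + eps s - eps j + eps j = β + eps s := by
        funext k
        simp only [Pi.sub_apply, Pi.add_apply, eps]
        ring
      rw [hc1, hc2, hc3]
  rw [h2]
  rw [smul_smul, smul_smul, smul_smul, ← sub_smul]
  congr 1
  have hsplit : ∑ i ∈ Finset.Icc (s+1) n, β i
      = (∑ i ∈ Finset.Ioo s j, β i) + β j + ∑ i ∈ Finset.Icc (j+1) n, β i := by
    rw [← Finset.Ico_add_one_right_eq_Icc,
      ← Finset.sum_Ico_consecutive _ (by omega : s + 1 ≤ j) (by omega : j ≤ n + 1),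
      Finset.sum_eq_sum_Ico_succ_bot (by omega : j < n + 1),
      ← Finset.Ico_add_one_left_eq_Ioo, Finset.Ico_add_one_right_eq_Icc]
    ring
  rw [hsplit, show -((∑ i ∈ Finset.Ioo s j, β i) + β j + ∑ i ∈ Finset.Icc (j+1) n, β i)
      = -(∑ i ∈ Finset.Ioo s j, β i) + -β j + -(∑ i ∈ Finset.Icc (j+1) n, β i) by ring,
    zpow_add₀ hq0, zpow_add₀ hq0]
  linear_combination (-(q ^ (-(∑ i ∈ Finset.Ioo s j, β i)) * q ^ (-(∑ i ∈ Finset.Icc (j+1) n, β i))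
      * qint q (β s + 1))) * key_scalar q hq0 hd n s j hs hsj hjn β
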